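/- For 0 ≤ μ ≤ 1, the two-qubit pure state |ψ⟩ = √((1−μ)/2)(|00⟩+|11⟩) + √(μ/2)(i|01⟩ − i|10⟩) satisfies Tr(P_s ψ) = 1−μ, Tr(P_as ψ) = μ, and F(ψ_A, ψ_B) = |1 − 2μ|, so the bound F(ψ_A,ψ_B) ≥ |Tr(P_as ψ) − Tr(P_s ψ)| is attained with equality. -/

import Mathlib

open scoped Matrix Kronecker ComplexOrder

noncomputable section

namespace QEMD

variable {m n : Type*} [Fintype m] [Fintype n] [DecidableEq m] [DecidableEq n]

/-- Total square root: the PSD square root if `A` is PSD, else `0`. -/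
def msqrt (A : Matrix n n ℂ) : Matrix n n ℂ :=
  letI := Classical.dec A.PosSemidef
  if h : A.PosSemidef then
    (h.1.eigenvectorUnitary : Matrix n n ℂ) *
      Matrix.diagonal (((↑) : ℝ → ℂ) ∘ Real.sqrt ∘ h.1.eigenvalues) *
      (star h.1.eigenvectorUnitary : Matrix n n ℂ)
  else 0

/-- Trace norm `‖A‖₁ = Tr √(AᴴA)`. -/
def traceNorm (A : Matrix n n ℂ) : ℝ :=
  ((msqrt (Aᴴ * A)).trace).re

/-- Trace distance `D(ρ,σ) = ½‖ρ-σ‖₁`. -/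
def traceDist (ρ σ : Matrix n n ℂ) : ℝ := traceNorm (ρ - σ) / 2

/-- Fidelity `F(ρ,σ) = Tr √(√ρ σ √ρ)`. -/
def fidelity (ρ σ : Matrix n n ℂ) : ℝ :=
  ((msqrt (msqrt ρ * σ * msqrt ρ)).trace).re

/-- Density matrix predicate. -/
def IsDensity (ρ : Matrix n n ℂ) : Prop := ρ.PosSemidef ∧ ρ.trace = 1

/-- Projector `|v⟩⟨v|` onto a vector. -/
def proj (v : n → ℂ) : Matrix n n ℂ := Matrix.of fun i j => v i * star (v j)

/-- Partial trace over the first (left) factor. -/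
def traceLeft (ρ : Matrix (m × n) (m × n) ℂ) : Matrix n n ℂ :=
  Matrix.of fun i j => ∑ k, ρ (k, i) (k, j)

/-- Partial trace over the second (right) factor. -/
def traceRight (ρ : Matrix (m × n) (m × n) ℂ) : Matrix m m ℂ :=
  Matrix.of fun i j => ∑ k, ρ (i, k) (j, k)

/-- The swap operator `S|αβ⟩ = |βα⟩` on `ℂ^d ⊗ ℂ^d`. -/
def swap (d : ℕ) : Matrix (Fin d × Fin d) (Fin d × Fin d) ℂ :=
  Matrix.of fun p q => if p.1 = q.2 ∧ p.2 = q.1 then 1 else 0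

/-- Projection onto the symmetric subspace, `P_s = (I + S)/2`. -/
def Psym (d : ℕ) : Matrix (Fin d × Fin d) (Fin d × Fin d) ℂ := (2:ℂ)⁻¹ • (1 + swap d)

/-- Projection onto the antisymmetric subspace, `P_as = (I - S)/2`. -/
def Pasym (d : ℕ) : Matrix (Fin d × Fin d) (Fin d × Fin d) ℂ := (2:ℂ)⁻¹ • (1 - swap d)

/-- `ρAB` is a quantum coupling of `ρA` and `ρB`. -/
def IsCoupling (ρAB : Matrix (m × n) (m × n) ℂ) (ρA : Matrix m m ℂ)
    (ρB : Matrix n n ℂ) : Prop :=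
  IsDensity ρAB ∧ traceRight ρAB = ρA ∧ traceLeft ρAB = ρB

/-- The maximally entangled vector `|Φ⟩ = (1/√d) ∑ᵢ |i⟩|i⟩`. -/
def maxEnt (d : ℕ) : Fin d × Fin d → ℂ :=
  fun p => if p.1 = p.2 then ((1 / Real.sqrt d : ℝ) : ℂ) else 0

open scoped MatrixOrder in
lemma msqrt_eq_csqrt {A : Matrix n n ℂ} (hA : A.PosSemidef) : msqrt A = CFC.sqrt A := by
  rw [msqrt, dif_pos hA, CFC.sqrt_eq_cfc, cfc_nnreal_eq_real _ A hA.nonneg, hA.1.cfc_eq]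
  simp only [Matrix.IsHermitian.cfc, Unitary.conjStarAlgAut_apply, Real.coe_sqrt,
    Real.coe_toNNReal']
  congr 3
  funext i
  simp [max_eq_left (hA.eigenvalues_nonneg i)]

open scoped MatrixOrder in
lemma msqrt_mul_self {A : Matrix n n ℂ} (hA : A.PosSemidef) : msqrt A * msqrt A = A := by
  rw [msqrt_eq_csqrt hA]; exact CFC.sqrt_mul_sqrt_self A hA.nonneg

open scoped MatrixOrder in
lemma msqrt_eq {A B : Matrix n n ℂ} (hB : B.PosSemidef) (h : B * B = A) :
    msqrt A = B := by
  have hA : A.PosSemidef := by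
    rw [← h, ← pow_two]; exact hB.pow 2
  rw [msqrt_eq_csqrt hA]; exact CFC.sqrt_unique h hB.nonneg

lemma psd_smul_one (r : ℝ) (hr : 0 ≤ r) :
    ((r : ℂ) • (1 : Matrix n n ℂ)).PosSemidef := by
  exact Matrix.PosSemidef.one.smul (Complex.zero_le_real.2 hr)

lemma traceRight_proj_psd (ψ : m × n → ℂ) : (traceRight (proj ψ)).PosSemidef := by
  have h : traceRight (proj ψ) = (Matrix.of fun i k => ψ (i, k)) *
      (Matrix.of fun i k => ψ (i, k))ᴴ := by
    ext i j
    simp [traceRight, proj, Matrix.mul_apply, Matrix.conjTranspose_apply]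
  rw [h]
  exact Matrix.posSemidef_self_mul_conjTranspose _

theorem stmt5 (μ : ℝ) (hμ0 : 0 ≤ μ) (hμ1 : μ ≤ 1)
    (ψ : Fin 2 × Fin 2 → ℂ)
    (hψ : ψ = fun p =>
      if p.1 = p.2 then ((Real.sqrt ((1 - μ) / 2) : ℝ) : ℂ)
      else if p = (0, 1) then Complex.I * ((Real.sqrt (μ / 2) : ℝ) : ℂ)
      else -Complex.I * ((Real.sqrt (μ / 2) : ℝ) : ℂ)) :
    (Psym 2 * proj ψ).trace = ((1 - μ : ℝ) : ℂ) ∧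
    (Pasym 2 * proj ψ).trace = ((μ : ℝ) : ℂ) ∧
    fidelity (traceRight (proj ψ)) (traceLeft (proj ψ)) = |1 - 2 * μ| := by
  have ha2 : ((Real.sqrt ((1 - μ) / 2) : ℝ) : ℂ) ^ 2 = (1 - (μ:ℂ)) / 2 := by
    rw [← Complex.ofReal_pow, Real.sq_sqrt (by linarith)]; push_cast; ring
  have hb2 : ((Real.sqrt (μ / 2) : ℝ) : ℂ) ^ 2 = (μ:ℂ) / 2 := by
    rw [← Complex.ofReal_pow, Real.sq_sqrt (by linarith)]; push_cast; ring
  set a : ℝ := Real.sqrt ((1 - μ) / 2) with hadef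
  set b : ℝ := Real.sqrt (μ / 2) with hbdef
  have hρApsd : (traceRight (proj ψ)).PosSemidef := traceRight_proj_psd ψ
  set ρA := traceRight (proj ψ) with hρAdef
  set ρB := traceLeft (proj ψ) with hρBdef
  set c : ℝ := ((1 - 2 * μ) / 2) ^ 2 with hcdef
  set θ : ℂ := 2 * (a:ℂ) * (b:ℂ) * Complex.I with hθdef
  have hab : (a:ℂ)^2 * (b:ℂ)^2 = ((1 - (μ:ℂ)) / 2) * ((μ:ℂ) / 2) := by
    rw [ha2, hb2]
  have hθ2 : θ ^ 2 = -((1 - (μ:ℂ)) * μ) := by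
    rw [hθdef]
    linear_combination 4*(a:ℂ)^2*(b:ℂ)^2*Complex.I_sq - 4*hab
  have hAval : ρA = !![1/2, θ; -θ, 1/2] := by
    subst hψ
    ext i j
    fin_cases i <;> fin_cases j <;>
      simp [hρAdef, traceRight, proj, Fin.sum_univ_two, Complex.star_def,
        map_mul, Complex.conj_ofReal, Complex.conj_I, hθdef] <;>
      first
        | ring1
        | linear_combination ha2 + hb2
        | linear_combination ha2 + hb2 - (b:ℂ)^2 * Complex.I_sq
        | linear_combination ha2 + hb2 + (b:ℂ)^2 * Complex.I_sq
  have hBval : ρB = !![1/2, -θ; θ, 1/2] := by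
    subst hψ
    ext i j
    fin_cases i <;> fin_cases j <;>
      simp [hρBdef, traceLeft, proj, Fin.sum_univ_two, Complex.star_def,
        map_mul, Complex.conj_ofReal, Complex.conj_I, hθdef] <;>
      first
        | ring1
        | linear_combination ha2 + hb2
        | linear_combination ha2 + hb2 - (b:ℂ)^2 * Complex.I_sq
        | linear_combination ha2 + hb2 + (b:ℂ)^2 * Complex.I_sq
  have hsum : ρB = 1 - ρA := by
    rw [hAval, hBval]
    ext i j
    fin_cases i <;> fin_cases j <;> simp [Matrix.one_apply] <;> ring
  have hsq : ρA * ρA = ρA - (c : ℂ) • 1 := by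
    rw [hAval]
    ext i j
    fin_cases i <;> fin_cases j <;>
      simp [Matrix.mul_apply, Fin.sum_univ_two, Matrix.one_apply, hcdef] <;>
      push_cast <;>
      first
        | ring1
        | linear_combination -hθ2
        | linear_combination hθ2
  refine ⟨?_, ?_, ?_⟩
  · subst hψ
    simp [Psym, swap, proj, Matrix.trace, Matrix.mul_apply, Fintype.sum_prod_type,
      Fin.sum_univ_two, Matrix.diag, Matrix.one_apply, Prod.ext_iff,
      Complex.star_def, map_mul, Complex.conj_ofReal, Complex.conj_I]
    push_cast
    linear_combination 2*ha2
  · subst hψ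
    simp [Pasym, swap, proj, Matrix.trace, Matrix.mul_apply, Fintype.sum_prod_type,
      Fin.sum_univ_two, Matrix.diag, Matrix.one_apply, Prod.ext_iff,
      Complex.star_def, map_mul, Complex.conj_ofReal, Complex.conj_I]
    push_cast
    first
      | linear_combination 2*hb2
      | linear_combination 2*hb2 - 2*(b:ℂ)^2*Complex.I_sq
      | linear_combination 2*hb2 + 2*(b:ℂ)^2*Complex.I_sq
  · -- fidelity
    have hss : msqrt ρA * msqrt ρA = ρA := by
      exact msqrt_mul_self hρApsd
    obtain ⟨s, hseq⟩ : ∃ s, msqrt ρA = s := ⟨_, rfl⟩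
    rw [hseq] at hss
    have hmid : s * ρB * s = (c : ℂ) • 1 := by
      rw [hsum, ← hss]
      have h1 : s * (1 - s * s) * s = s * s - (s * s) * (s * s) := by noncomm_ring
      rw [h1, hss, hsq, sub_sub_cancel]
    have hc0 : (0:ℝ) ≤ c := sq_nonneg _
    have hsc : msqrt ((c : ℂ) • (1 : Matrix (Fin 2) (Fin 2) ℂ))
        = ((Real.sqrt c : ℝ) : ℂ) • 1 := by
      refine msqrt_eq (psd_smul_one _ (Real.sqrt_nonneg c)) ?_
      rw [smul_mul_smul_comm, one_mul, ← Complex.ofReal_mul,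
        Real.mul_self_sqrt hc0]
    rw [fidelity, hseq, hmid, hsc]
    rw [Matrix.trace_smul, Matrix.trace_one]
    have : Real.sqrt c = |1 - 2*μ| / 2 := by
      rw [hcdef, Real.sqrt_sq_eq_abs, abs_div]
      norm_num
    simp [this, Complex.ofReal_re]
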